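/- Assume λ > λ₁/2 and λ₁ < λ₂, and set q₁ = √(1 − λ₁/(2λ)) e₁. Then the Hessian of ℓ at ±q₁ is positive definite; in particular ±q₁ are strict local minima of ℓ. -/

import Mathlib

open Topology


noncomputable def sqCLM (d : ℕ) : EuclideanSpace ℝ (Fin d) →L[ℝ] (EuclideanSpace ℝ (Fin d) →L[ℝ] ℝ) :=
  ∑ i, (EuclideanSpace.proj i).smulRight (EuclideanSpace.proj i)

noncomputable def tCLM (d : ℕ) (Λ : Fin d → ℝ) :
    EuclideanSpace ℝ (Fin d) →L[ℝ] (EuclideanSpace ℝ (Fin d) →L[ℝ] ℝ) :=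
  ∑ i, ((2 * Λ i) • EuclideanSpace.proj i).smulRight (EuclideanSpace.proj i)

@[simp] lemma sqCLM_apply (d : ℕ) (q u : EuclideanSpace ℝ (Fin d)) :
    sqCLM d q u = ∑ i, q i * u i := by
  simp [sqCLM]

@[simp] lemma tCLM_apply (d : ℕ) (Λ : Fin d → ℝ) (q u : EuclideanSpace ℝ (Fin d)) :
    tCLM d Λ q u = ∑ i, 2 * Λ i * q i * u i := by
  simp [tCLM, mul_assoc]

lemma norm_sq_eq (d : ℕ) (q : EuclideanSpace ℝ (Fin d)) : ‖q‖ ^ 2 = ∑ i, q i ^ 2 := by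
  rw [← real_inner_self_eq_norm_sq, PiLp.inner_apply]
  simp [RCLike.inner_apply, sq]

lemma hasFDerivAt_coord_sq (d : ℕ) (q : EuclideanSpace ℝ (Fin d)) (i : Fin d) :
    HasFDerivAt (𝕜 := ℝ) (fun q : EuclideanSpace ℝ (Fin d) => (q i ^ 2 : ℝ))
      ((2 * q i : ℝ) • EuclideanSpace.proj i) q := by
  have hp : HasFDerivAt (𝕜 := ℝ) (⇑(EuclideanSpace.proj (𝕜 := ℝ) (ι := Fin d) i))
      (EuclideanSpace.proj (𝕜 := ℝ) i) q := by exact ContinuousLinearMap.hasFDerivAt _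
  have h2 := hp.mul hp
  refine (h2.congr_of_eventuallyEq (Filter.Eventually.of_forall fun y => ?_)).congr_fderiv ?_
  · simp [sq]
  · ext u; simp; ring

lemma hasFDerivAt_N (d : ℕ) (q : EuclideanSpace ℝ (Fin d)) :
    HasFDerivAt (fun q : EuclideanSpace ℝ (Fin d) => ∑ i, (q i ^ 2 : ℝ)) ((2:ℝ) • sqCLM d q) q := by
  have := HasFDerivAt.fun_sum (fun i (_ : i ∈ Finset.univ) => hasFDerivAt_coord_sq d q i)
  refine this.congr_fderiv ?_
  ext u
  simp [Finset.mul_sum]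
  exact Finset.sum_congr rfl fun i _ => by ring

noncomputable def Dm (d : ℕ) (Λ : Fin d → ℝ) (lam : ℝ) (q : EuclideanSpace ℝ (Fin d)) :
    EuclideanSpace ℝ (Fin d) →L[ℝ] ℝ :=
  tCLM d Λ q + (4 * lam * ((∑ i, q i ^ 2) - 1)) • sqCLM d q

lemma hasFDerivAt_ell (d : ℕ) (Λ : Fin d → ℝ) (lam : ℝ)
    (ℓ : EuclideanSpace ℝ (Fin d) → ℝ)
    (hℓ : ∀ q : EuclideanSpace ℝ (Fin d),
      ℓ q = ∑ i, Λ i * q i ^ 2 + lam * (‖q‖ ^ 2 - 1) ^ 2)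
    (q : EuclideanSpace ℝ (Fin d)) : HasFDerivAt ℓ (Dm d Λ lam q) q := by
  have hℓ' : ℓ = fun q : EuclideanSpace ℝ (Fin d) =>
      (∑ i, Λ i * q i ^ 2) + lam * (((∑ i, q i ^ 2) - 1) * ((∑ i, q i ^ 2) - 1)) := by
    funext x
    rw [hℓ x, norm_sq_eq]
    ring
  rw [hℓ']
  have h1 : HasFDerivAt (𝕜 := ℝ) (fun q : EuclideanSpace ℝ (Fin d) => (∑ i, Λ i * q i ^ 2 : ℝ))
      (∑ i, (Λ i : ℝ) • ((2 * q i : ℝ) • EuclideanSpace.proj (𝕜 := ℝ) i)) q :=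
    HasFDerivAt.fun_sum (fun i (_ : i ∈ Finset.univ) => (hasFDerivAt_coord_sq d q i).const_mul (Λ i))
  have hs := (hasFDerivAt_N d q).sub_const 1
  have h2 := (hs.mul hs).const_mul lam
  have h := h1.add h2
  refine h.congr_fderiv ?_
  ext u
  simp [Dm]
  ring_nf

noncomputable def Hm (d : ℕ) (Λ : Fin d → ℝ) (lam : ℝ) (q0 : EuclideanSpace ℝ (Fin d)) :
    EuclideanSpace ℝ (Fin d) →L[ℝ] (EuclideanSpace ℝ (Fin d) →L[ℝ] ℝ) :=
  tCLM d Λ + ((4 * lam * ((∑ i, q0 i ^ 2) - 1)) • sqCLM d +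
    ((4 * lam : ℝ) • ((2:ℝ) • sqCLM d q0)).smulRight (sqCLM d q0))

lemma hasFDerivAt_Dm (d : ℕ) (Λ : Fin d → ℝ) (lam : ℝ) (q0 : EuclideanSpace ℝ (Fin d)) :
    HasFDerivAt (fun q => Dm d Λ lam q) (Hm d Λ lam q0) q0 := by
  have hT : HasFDerivAt (𝕜 := ℝ) (⇑(tCLM d Λ)) (tCLM d Λ) q0 := by
    exact ContinuousLinearMap.hasFDerivAt _
  have hc : HasFDerivAt (𝕜 := ℝ)
      (fun q : EuclideanSpace ℝ (Fin d) => (4 * lam * ((∑ i, q i ^ 2) - 1) : ℝ))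
      ((4 * lam : ℝ) • ((2:ℝ) • sqCLM d q0)) q0 :=
    ((hasFDerivAt_N d q0).sub_const 1).const_mul (4 * lam)
  have hS : HasFDerivAt (𝕜 := ℝ) (⇑(sqCLM d)) (sqCLM d) q0 := by
    exact ContinuousLinearMap.hasFDerivAt _
  exact hT.add (hc.smul hS)

lemma Hm_apply (d : ℕ) (Λ : Fin d → ℝ) (lam : ℝ) (q0 u : EuclideanSpace ℝ (Fin d)) :
    Hm d Λ lam q0 u u = (∑ i, 2 * Λ i * u i ^ 2)
      + (4 * lam * ((∑ i, q0 i ^ 2) - 1)) * (∑ i, u i ^ 2)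
      + 8 * lam * (∑ i, q0 i * u i) ^ 2 := by
  simp [Hm]
  ring_nf

lemma Hm_pos (d : ℕ) (hd : 2 ≤ d) (Λ : Fin d → ℝ) (hΛmono : Monotone Λ)
    (lam : ℝ) (hlam : 0 < lam)
    (hlam1 : Λ ⟨0, Nat.lt_of_lt_of_le Nat.two_pos hd⟩ / 2 < lam)
    (h12 : Λ ⟨0, Nat.lt_of_lt_of_le Nat.two_pos hd⟩ < Λ ⟨1, Nat.lt_of_lt_of_le Nat.one_lt_two hd⟩)
    (q0 : EuclideanSpace ℝ (Fin d))
    (hsum : ∑ i, q0 i ^ 2 = 1 - Λ ⟨0, Nat.lt_of_lt_of_le Nat.two_pos hd⟩ / (2 * lam))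
    (hmix : ∀ u : EuclideanSpace ℝ (Fin d),
      (∑ i, q0 i * u i) ^ 2 = (1 - Λ ⟨0, Nat.lt_of_lt_of_le Nat.two_pos hd⟩ / (2 * lam)) * u ⟨0, Nat.lt_of_lt_of_le Nat.two_pos hd⟩ ^ 2)
    (u : EuclideanSpace ℝ (Fin d)) (hu : u ≠ 0) : 0 < Hm d Λ lam q0 u u := by
  have h0d : 0 < d := by omega
  have h1d : 1 < d := by omega
  set i0 : Fin d := ⟨0, by omega⟩ with hi0
  set i1 : Fin d := ⟨1, by omega⟩ with hi1
  set a := Λ i0 with ha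
  have hc : 0 < 1 - a / (2 * lam) := by
    rw [sub_pos, div_lt_one (by positivity)]; linarith
  rw [Hm_apply, hsum, hmix]
  have key : ∑ i, (2 * Λ i - 2 * a) * u i ^ 2
      = (∑ i, 2 * Λ i * u i ^ 2) - 2 * a * (∑ i, u i ^ 2) := by
    rw [Finset.mul_sum, ← Finset.sum_sub_distrib]
    exact Finset.sum_congr rfl fun i _ => by ring
  have hnn : ∀ i, 0 ≤ (2 * Λ i - 2 * a) * u i ^ 2 := by
    intro i
    have : a ≤ Λ i := hΛmono (show i0 ≤ i by simp [hi0, Fin.le_def])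
    exact mul_nonneg (by linarith) (sq_nonneg _)
  have h4 : 4 * lam * (1 - a / (2 * lam) - 1) = -(2 * a) := by
    field_simp
    ring
  rw [h4]
  obtain ⟨j, hj⟩ : ∃ j, u j ≠ 0 := by
    by_contra h; push_neg at h
    exact hu (by ext j; exact h j)
  by_cases hj0 : j = i0
  · have hu0 : 0 < u i0 ^ 2 :=
      lt_of_le_of_ne (sq_nonneg _) (Ne.symm (pow_ne_zero 2 (hj0 ▸ hj)))
    have h8 : 0 < 8 * lam * ((1 - a / (2 * lam)) * u i0 ^ 2) := by
      have := mul_pos hc hu0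
      have h8l : (0:ℝ) < 8 * lam := by linarith
      exact mul_pos h8l this
    have hs : 0 ≤ ∑ i, (2 * Λ i - 2 * a) * u i ^ 2 :=
      Finset.sum_nonneg fun i _ => hnn i
    nlinarith [key, hs, h8]
  · have h1le : i1 ≤ j := by
      have hne : (j : ℕ) ≠ 0 := by
        intro hh
        apply hj0
        apply Fin.ext
        simp [hi0, hh]
      rw [hi1, Fin.le_def]
      simp only [Fin.val_mk]
      omega
    have hpos : 0 < (2 * Λ j - 2 * a) * u j ^ 2 := by
      have hΛj : a < Λ j := lt_of_lt_of_le h12 (hΛmono h1le)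
      exact mul_pos (by linarith) (lt_of_le_of_ne (sq_nonneg _) (Ne.symm (pow_ne_zero 2 hj)))
    have hsumpos : 0 < ∑ i, (2 * Λ i - 2 * a) * u i ^ 2 :=
      Finset.sum_pos' (fun i _ => hnn i) ⟨j, Finset.mem_univ j, hpos⟩
    have h8 : 0 ≤ 8 * lam * ((1 - a / (2 * lam)) * u i0 ^ 2) := by
      have := mul_nonneg hc.le (sq_nonneg (u i0))
      have h8l : (0:ℝ) ≤ 8 * lam := by linarith
      exact mul_nonneg h8l this
    nlinarith [key, hsumpos, h8]


set_option maxHeartbeats 1000000 in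
/-- If `λ > λ₁/2` and `λ₁ < λ₂`, then at `±q₁ = ±√(1 − λ₁/(2λ)) e₁` the Hessian
of `ℓ` is positive definite; in particular `±q₁` are strict local minima of `ℓ`. -/
theorem stmt8 (d : ℕ) (hd : 2 ≤ d) (Λ : Fin d → ℝ) (hΛ0 : 0 ≤ Λ ⟨0, by omega⟩)
    (hΛmono : Monotone Λ) (lam : ℝ) (hlam : 0 < lam)
    (ℓ : EuclideanSpace ℝ (Fin d) → ℝ)
    (hℓ : ∀ q : EuclideanSpace ℝ (Fin d),
      ℓ q = ∑ i, Λ i * q i ^ 2 + lam * (‖q‖ ^ 2 - 1) ^ 2)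
    (hlam1 : Λ ⟨0, by omega⟩ / 2 < lam)
    (h12 : Λ ⟨0, by omega⟩ < Λ ⟨1, by omega⟩)
    (q1 : EuclideanSpace ℝ (Fin d))
    (hq1 : q1 = Real.sqrt (1 - Λ ⟨0, by omega⟩ / (2 * lam)) •
      EuclideanSpace.single (⟨0, by omega⟩ : Fin d) (1 : ℝ)) :
    (∀ u : EuclideanSpace ℝ (Fin d), u ≠ 0 → 0 < fderiv ℝ (fderiv ℝ ℓ) q1 u u) ∧
    (∀ u : EuclideanSpace ℝ (Fin d), u ≠ 0 → 0 < fderiv ℝ (fderiv ℝ ℓ) (-q1) u u) ∧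
    (∀ᶠ x in 𝓝[≠] q1, ℓ q1 < ℓ x) ∧
    (∀ᶠ x in 𝓝[≠] (-q1), ℓ (-q1) < ℓ x) := by
  set i0 : Fin d := ⟨0, by omega⟩ with hi0
  set i1 : Fin d := ⟨1, by omega⟩ with hi1
  set a := Λ i0 with ha
  have hc : 0 < 1 - a / (2 * lam) := by
    rw [sub_pos, div_lt_one (by positivity)]; linarith
  set t := Real.sqrt (1 - a / (2 * lam)) with htdef
  have ht2 : t ^ 2 = 1 - a / (2 * lam) := Real.sq_sqrt hc.le
  have ht : 0 < t := Real.sqrt_pos.2 hc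
  have hq1c : ∀ j, q1 j = if j = i0 then t else 0 := by
    intro j
    rw [hq1]
    simp [EuclideanSpace.single_apply, mul_ite]
  have hsum1 : ∑ j, q1 j ^ 2 = 1 - a / (2 * lam) := by
    rw [← ht2]
    simp [hq1c, ite_pow, Finset.sum_ite_eq']
  have hmix1 : ∀ u : EuclideanSpace ℝ (Fin d), ∑ j, q1 j * u j = t * u i0 := by
    intro u
    simp [hq1c, ite_mul, Finset.sum_ite_eq']
  have hmixsq : ∀ u : EuclideanSpace ℝ (Fin d),
      (∑ j, q1 j * u j) ^ 2 = (1 - a / (2 * lam)) * u i0 ^ 2 := by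
    intro u
    rw [hmix1 u, mul_pow, ht2]
  have hsum1n : ∑ j, (-q1) j ^ 2 = 1 - a / (2 * lam) := by
    rw [← hsum1]
    exact Finset.sum_congr rfl fun i _ => by rw [PiLp.neg_apply]; ring
  have hmixn : ∀ u : EuclideanSpace ℝ (Fin d),
      (∑ j, (-q1) j * u j) ^ 2 = (1 - a / (2 * lam)) * u i0 ^ 2 := by
    intro u
    have hneg : ∑ j, (-q1) j * u j = -(∑ j, q1 j * u j) := by
      rw [← Finset.sum_neg_distrib]
      exact Finset.sum_congr rfl fun i _ => by rw [PiLp.neg_apply]; ring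
    rw [hneg, neg_pow, hmixsq u]; ring
  -- Hessian
  have hfd : fderiv ℝ ℓ = fun q => Dm d Λ lam q :=
    funext fun q => (hasFDerivAt_ell d Λ lam ℓ hℓ q).fderiv
  have hH1 : fderiv ℝ (fderiv ℝ ℓ) q1 = Hm d Λ lam q1 := by
    rw [hfd]; exact (hasFDerivAt_Dm d Λ lam q1).fderiv
  have hH2 : fderiv ℝ (fderiv ℝ ℓ) (-q1) = Hm d Λ lam (-q1) := by
    rw [hfd]; exact (hasFDerivAt_Dm d Λ lam (-q1)).fderiv
  have pos1 : ∀ u : EuclideanSpace ℝ (Fin d), u ≠ 0 → 0 < fderiv ℝ (fderiv ℝ ℓ) q1 u u := by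
    intro u hu
    rw [hH1]
    exact Hm_pos d hd Λ hΛmono lam hlam hlam1 h12 q1 hsum1 hmixsq u hu
  have pos2 : ∀ u : EuclideanSpace ℝ (Fin d), u ≠ 0 → 0 < fderiv ℝ (fderiv ℝ ℓ) (-q1) u u := by
    intro u hu
    rw [hH2]
    exact Hm_pos d hd Λ hΛmono lam hlam hlam1 h12 (-q1) hsum1n hmixn u hu
  -- value at q1
  have hval : ℓ q1 = a * (1 - a / (2 * lam)) + lam * ((1 - a / (2 * lam)) - 1) ^ 2 := by
    rw [hℓ q1, norm_sq_eq, hsum1]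
    congr 1
    rw [← ht2]
    simp [hq1c, ite_pow, mul_ite, Finset.sum_ite_eq']
    exact Or.inl rfl
  have key : ∀ x : EuclideanSpace ℝ (Fin d), ℓ x = ℓ q1 + (∑ i, (Λ i - a) * x i ^ 2)
      + lam * ((∑ i, x i ^ 2) - (1 - a / (2 * lam))) ^ 2 := by
    intro x
    rw [hℓ x, norm_sq_eq, hval]
    have expand : ∑ i, (Λ i - a) * x i ^ 2
        = (∑ i, Λ i * x i ^ 2) - a * ∑ i, x i ^ 2 := by
      rw [Finset.mul_sum, ← Finset.sum_sub_distrib]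
      exact Finset.sum_congr rfl fun i _ => by ring
    rw [expand]
    field_simp
    ring
  have strict : ∀ x : EuclideanSpace ℝ (Fin d), x ≠ q1 → x ≠ -q1 → ℓ q1 < ℓ x := by
    intro x hx1 hx2
    rw [key x]
    have hAnn : ∀ i ∈ Finset.univ, 0 ≤ (Λ i - a) * x i ^ 2 := by
      intro i _
      have : a ≤ Λ i := hΛmono (show i0 ≤ i by simp [hi0, Fin.le_def])
      exact mul_nonneg (by linarith) (sq_nonneg _)
    have hA : 0 ≤ ∑ i, (Λ i - a) * x i ^ 2 := Finset.sum_nonneg hAnn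
    have hB : 0 ≤ lam * ((∑ i, x i ^ 2) - (1 - a / (2 * lam))) ^ 2 :=
      mul_nonneg hlam.le (sq_nonneg _)
    rcases hA.lt_or_eq with h | h
    · linarith
    rcases hB.lt_or_eq with h' | h'
    · linarith
    exfalso
    have hAz : ∀ i, (Λ i - a) * x i ^ 2 = 0 := by
      have := (Finset.sum_eq_zero_iff_of_nonneg hAnn).1 h.symm
      intro i; exact this i (Finset.mem_univ i)
    have hxi : ∀ i, i ≠ i0 → x i = 0 := by
      intro i hi
      have h1le : i1 ≤ i := by
        have hne : (i : ℕ) ≠ 0 := by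
          intro hh
          apply hi
          apply Fin.ext
          simp [hi0, hh]
        rw [hi1, Fin.le_def]
        simp only [Fin.val_mk]
        omega
      have hΛi : a < Λ i := lt_of_lt_of_le h12 (hΛmono h1le)
      rcases mul_eq_zero.1 (hAz i) with h'' | h''
      · linarith
      · exact pow_eq_zero_iff (two_ne_zero) |>.1 h''
    have hsx : ∑ i, x i ^ 2 = x i0 ^ 2 :=
      Finset.sum_eq_single i0 (fun i _ hi => by rw [hxi i hi]; ring)
        (fun hmem => absurd (Finset.mem_univ i0) hmem)
    have hx0 : x i0 ^ 2 = 1 - a / (2 * lam) := by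
      have hz : ((∑ i, x i ^ 2) - (1 - a / (2 * lam))) ^ 2 = 0 := by
        have := h'.symm
        have hl : lam ≠ 0 := ne_of_gt hlam
        rcases mul_eq_zero.1 this with h'' | h''
        · exact absurd h'' hl
        · exact h''
      have := pow_eq_zero_iff (two_ne_zero) |>.1 hz
      rw [hsx] at this
      linarith
    have hfac : (x i0 - t) * (x i0 + t) = 0 := by linear_combination hx0 - ht2
    rcases mul_eq_zero.1 hfac with h'' | h''
    · apply hx1
      ext j
      rw [hq1c j]
      by_cases hj : j = i0
      · rw [hj]; simp; linarith
      · rw [hxi j hj]; simp [hj]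
    · apply hx2
      ext j
      rw [show (-q1) j = -(q1 j) from rfl, hq1c j]
      by_cases hj : j = i0
      · rw [hj]; simp; linarith
      · rw [hxi j hj]; simp [hj]
  have hnq1 : ‖q1‖ = t := by
    rw [← Real.sqrt_sq (norm_nonneg q1), norm_sq_eq, hsum1, ← ht2, Real.sqrt_sq ht.le]
  have hdist : dist (-q1) q1 = 2 * t := by
    rw [dist_eq_norm]
    have : -q1 - q1 = (-2 : ℝ) • q1 := by module
    rw [this, norm_smul, hnq1]
    simp [mul_comm]
  have hnegval : ℓ (-q1) = ℓ q1 := by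
    rw [hℓ (-q1), hℓ q1, norm_neg]
    congr 1
    exact Finset.sum_congr rfl fun i _ => by rw [PiLp.neg_apply]; ring
  have ev1 : ∀ᶠ x in 𝓝[≠] q1, ℓ q1 < ℓ x := by
    rw [eventually_nhdsWithin_iff]
    filter_upwards [Metric.ball_mem_nhds q1 ht] with x hx hne
    refine strict x (Set.mem_compl_singleton_iff.1 hne) ?_
    intro heq
    rw [Metric.mem_ball, heq, hdist] at hx
    linarith
  have ev2 : ∀ᶠ x in 𝓝[≠] (-q1), ℓ (-q1) < ℓ x := by
    rw [eventually_nhdsWithin_iff]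
    filter_upwards [Metric.ball_mem_nhds (-q1) ht] with x hx hne
    rw [hnegval]
    refine strict x ?_ (Set.mem_compl_singleton_iff.1 hne)
    intro heq
    rw [Metric.mem_ball, heq, dist_comm, hdist] at hx
    linarith
  exact ⟨pos1, pos2, ev1, ev2⟩
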